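/- The function Q(x,t) = (1 - (1 - (1-t)(1-x))^n)/(1-t), as a formal power series in t with polynomial coefficients in x, has coefficient of t^k equal to Q_k(x), where Q_0(x) = 1 - x^n and Q_{k+1}(x) = Q_k(x) + ((1-x)/(k+1)) Q_k'(x). -/

import Mathlib

open Polynomial in
noncomputable def pp (n j : ℕ) : Polynomial ℚ :=
  C (n.choose j : ℚ) * X ^ (n - j) * (1 - X) ^ j

open Polynomial in
lemma pp_step (n m : ℕ) : (1 - X) * (pp n m).derivative
    = C ((m : ℚ) + 1) * pp n (m + 1) - C (m : ℚ) * pp n m := by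
  have hc : (C (n.choose (m+1) : ℚ) : Polynomial ℚ) * C ((m : ℚ) + 1)
      = C (n.choose m : ℚ) * C (((n - m : ℕ) : ℚ)) := by
    rw [← C_mul, ← C_mul]
    congr 1
    exact_mod_cast congrArg (Nat.cast : ℕ → ℚ) (Nat.choose_succ_right_eq n m)
  cases m with
  | zero =>
      simp only [pp, Nat.cast_zero, Nat.choose_zero_right, Nat.cast_one, map_one, one_mul,
        pow_zero, mul_one, derivative_X_pow, zero_add, map_zero, zero_mul, sub_zero, pow_one,
        Nat.sub_zero]
      simp only [Nat.cast_zero, Nat.choose_zero_right, Nat.cast_one, map_one, one_mul,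
        Nat.sub_zero, zero_add] at hc
      linear_combination (X ^ (n - 1) * (1 - X)) * hc.symm
  | succ m =>
      simp only [pp, derivative_mul, derivative_pow, derivative_X_pow, derivative_C,
        derivative_sub, derivative_one, derivative_X, zero_mul, mul_zero, zero_add,
        Nat.add_sub_cancel, zero_sub,
        show n - (m + 1 + 1) = n - (m + 1) - 1 from by omega]
      simp only [Nat.cast_add, Nat.cast_one] at hc ⊢
      linear_combination (X ^ (n - (m + 1) - 1) * (1 - X) ^ (m + 2)) * hc.symm

open Polynomial in
lemma pp_telescope (n : ℕ) : ∀ k : ℕ,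
    (1 - X) * Polynomial.derivative (∑ j ∈ Finset.range k, pp n j) = C (k : ℚ) * pp n k
  | 0 => by simp
  | (k + 1) => by
      rw [Finset.sum_range_succ, derivative_add, mul_add, pp_telescope n k, pp_step]
      push_cast
      ring

open Polynomial in
lemma Q_closed (n : ℕ) (Q : ℕ → Polynomial ℚ)
    (hQ0 : Q 0 = 1 - X ^ n)
    (hQrec : ∀ k : ℕ, Q (k + 1) = Q k +
      C ((k + 1 : ℚ)⁻¹) * (1 - X) * (Q k).derivative) :
    ∀ k : ℕ, Q k = 1 - ∑ j ∈ Finset.range (k + 1), pp n j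
  | 0 => by simp [hQ0, pp]
  | (k + 1) => by
      have ih := Q_closed n Q hQ0 hQrec k
      have hne : ((k : ℚ) + 1) ≠ 0 := by positivity
      rw [hQrec, ih, Finset.sum_range_succ (n := k + 1)]
      rw [derivative_sub, derivative_one, zero_sub]
      have h := pp_telescope n (k + 1)
      push_cast at h
      calc 1 - ∑ j ∈ Finset.range (k + 1), pp n j +
            C ((k : ℚ) + 1)⁻¹ * (1 - X) * -Polynomial.derivative (∑ j ∈ Finset.range (k + 1), pp n j)
          = 1 - ∑ j ∈ Finset.range (k + 1), pp n j -
            C ((k : ℚ) + 1)⁻¹ * ((1 - X) * Polynomial.derivative (∑ j ∈ Finset.range (k + 1), pp n j)) := by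
            ring
        _ = 1 - ∑ j ∈ Finset.range (k + 1), pp n j - C ((k : ℚ) + 1)⁻¹ * (C ((k : ℚ) + 1) * pp n (k + 1)) := by
            rw [h]
        _ = 1 - (∑ j ∈ Finset.range (k + 1), pp n j + pp n (k + 1)) := by
            rw [← mul_assoc, ← C_mul, inv_mul_cancel₀ hne, Polynomial.C_1, one_mul]
            ring

open PowerSeries

theorem stmt_6 (n : ℕ) (Q : ℕ → Polynomial ℚ)
    (hQ0 : Q 0 = 1 - Polynomial.X ^ n)
    (hQrec : ∀ k : ℕ, Q (k + 1) = Q k +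
      Polynomial.C ((k + 1 : ℚ)⁻¹) * (1 - Polynomial.X) * (Q k).derivative) :
    (1 - PowerSeries.X) * PowerSeries.mk Q
      = 1 - (1 - (1 - PowerSeries.X) *
          (1 - PowerSeries.C (R := Polynomial ℚ) Polynomial.X)) ^ n := by
  have hrec' : ∀ k : ℕ, Q (k + 1) = Q k +
      Polynomial.C (((k : ℚ) + 1)⁻¹) * (1 - Polynomial.X) * (Q k).derivative := by
    intro k; have := hQrec k; push_cast at this; exact this
  have hcl := Q_closed n Q hQ0 hrec'
  set u : (Polynomial ℚ)⟦X⟧ := PowerSeries.C (R := Polynomial ℚ) Polynomial.X with hu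
  have hrw : (1 - (1 - PowerSeries.X) * (1 - u)) = PowerSeries.X * (1 - u) + u := by ring
  rw [hrw, add_pow]
  have hterm : ∀ j, (PowerSeries.X * (1 - u)) ^ j * u ^ (n - j)
      * ((n.choose j : ℕ) : (Polynomial ℚ)⟦X⟧)
      = PowerSeries.C (R := Polynomial ℚ) (pp n j) * PowerSeries.X ^ j := by
    intro j
    have : ((n.choose j : ℕ) : (Polynomial ℚ)⟦X⟧)
        = PowerSeries.C (R := Polynomial ℚ) (Polynomial.C ((n.choose j : ℕ) : ℚ)) := by
      rw [map_natCast, map_natCast]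
    rw [this]
    simp only [pp, map_mul, map_pow, map_sub, map_one, mul_pow, hu]
    ring
  rw [Finset.sum_congr rfl (fun j _ => hterm j)]
  ext k
  simp only [map_sub, map_sum, sub_mul, one_mul, coeff_mk, PowerSeries.coeff_one,
    PowerSeries.coeff_C_mul_X_pow, Finset.sum_ite_eq, Finset.mem_range]
  cases k with
  | zero =>
      simp [hQ0, pp, Nat.zero_lt_succ]
  | succ m =>
      have h1 := hcl (m + 1)
      have h2 := hcl m
      rw [PowerSeries.coeff_succ_X_mul, coeff_mk, h1, h2, Finset.sum_range_succ (n := m + 1)]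
      by_cases hm : m + 1 < n + 1
      · rw [if_pos hm, if_neg (by omega)]
        ring
      · rw [if_neg hm, if_neg (by omega)]
        have : pp n (m + 1) = 0 := by
          simp [pp, Nat.choose_eq_zero_of_lt (by omega : n < m + 1)]
        rw [this]
        ring
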